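/- Let q be a real orthogonal 4×4 matrix, θ ∈ (-π/2, π/2], and let u_α = (1/√(2+2 sin θ)) · (cos θ · q v_α, -(1+sin θ) v_α) ∈ ℝ⁸ for α = 1,…,4, where v_α is the standard basis of ℝ⁴. Then the vectors u_α are orthonormal and each is an eigenvector of H = cos θ·[[0,q],[qᵀ,0]] + sin θ·[[I₄,0],[0,-I₄]] with eigenvalue -1. -/

import Mathlib

open Matrix Real

/-- The 8×8 Hamiltonian `H = cos θ·[[0,q],[qᵀ,0]] + sin θ·[[I₄,0],[0,-I₄]]`. -/
noncomputable def Ham (θ : ℝ) (q : Matrix (Fin 4) (Fin 4) ℝ) :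
    Matrix (Fin 4 ⊕ Fin 4) (Fin 4 ⊕ Fin 4) ℝ :=
  Real.cos θ • Matrix.fromBlocks 0 q qᵀ 0 +
    Real.sin θ • Matrix.fromBlocks 1 0 0 (-1)

/-- The occupied-band wave functions
`u_α = (1/√(2+2 sin θ)) · (cos θ · q v_α, -(1+sin θ) v_α)`. -/
noncomputable def uVec (θ : ℝ) (q : Matrix (Fin 4) (Fin 4) ℝ) (α : Fin 4) :
    Fin 4 ⊕ Fin 4 → ℝ :=
  Sum.elim (fun i => Real.cos θ * q.mulVec (Pi.single α (1 : ℝ)) i / Real.sqrt (2 + 2 * Real.sin θ))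
    (fun i => -(1 + Real.sin θ) * (Pi.single α (1 : ℝ) : Fin 4 → ℝ) i / Real.sqrt (2 + 2 * Real.sin θ))

/-- For orthogonal `q` and `θ ∈ (-π/2, π/2]`, the vectors `u_α` are orthonormal and each
is an eigenvector of `H` with eigenvalue `-1`. -/
theorem stmt_19 (θ : ℝ) (hθ : θ ∈ Set.Ioc (-(π / 2)) (π / 2))
    (q : Matrix (Fin 4) (Fin 4) ℝ) (hq : qᵀ * q = 1) (hq' : q * qᵀ = 1) :
    (∀ α β : Fin 4, uVec θ q α ⬝ᵥ uVec θ q β = if α = β then 1 else 0) ∧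
    (∀ α : Fin 4, (Ham θ q).mulVec (uVec θ q α) = -uVec θ q α) := by
  obtain ⟨h1, h2⟩ := hθ
  have hs : -1 < Real.sin θ := by
    have h := Real.strictMonoOn_sin (a := -(π/2)) (b := θ)
      ⟨le_refl _, by linarith [Real.pi_pos]⟩ ⟨h1.le, h2⟩ h1
    simpa using h
  have hpos : (0:ℝ) < 2 + 2 * Real.sin θ := by linarith
  have hN : Real.sqrt (2 + 2 * Real.sin θ) * Real.sqrt (2 + 2 * Real.sin θ)
      = 2 + 2 * Real.sin θ := Real.mul_self_sqrt hpos.le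
  have hNne : Real.sqrt (2 + 2 * Real.sin θ) ≠ 0 := by positivity
  have hc : Real.cos θ ^ 2 = 1 - Real.sin θ ^ 2 := by
    have := Real.sin_sq_add_cos_sq θ; nlinarith
  constructor
  · intro α β
    have key : ∑ i, q i α * q i β = if α = β then 1 else 0 := by
      have h := congrFun (congrFun hq α) β
      simpa [Matrix.mul_apply, Matrix.one_apply, Matrix.transpose_apply] using h
    have key2 : ∑ i, (Pi.single α (1:ℝ) : Fin 4 → ℝ) i * (Pi.single β (1:ℝ) : Fin 4 → ℝ) i
        = if α = β then 1 else 0 := by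
      simp [Pi.single_apply, Finset.sum_ite_eq, eq_comm]
    simp only [uVec, dotProduct, Fintype.sum_sum_type, Sum.elim_inl, Sum.elim_inr,
      mulVec_single_one, Matrix.col_apply, mul_one]
    have e1 : ∀ i : Fin 4, Real.cos θ * q i α / Real.sqrt (2 + 2 * Real.sin θ) *
        (Real.cos θ * q i β / Real.sqrt (2 + 2 * Real.sin θ))
        = Real.cos θ ^ 2 / (2 + 2 * Real.sin θ) * (q i α * q i β) := by
      intro i; rw [div_mul_div_comm, hN]; ring
    have e2 : ∀ i : Fin 4, -(1 + Real.sin θ) * (Pi.single α (1:ℝ) : Fin 4 → ℝ) i /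
          Real.sqrt (2 + 2 * Real.sin θ) *
        (-(1 + Real.sin θ) * (Pi.single β (1:ℝ) : Fin 4 → ℝ) i /
          Real.sqrt (2 + 2 * Real.sin θ))
        = (1 + Real.sin θ) ^ 2 / (2 + 2 * Real.sin θ) *
            ((Pi.single α (1:ℝ) : Fin 4 → ℝ) i * (Pi.single β (1:ℝ) : Fin 4 → ℝ) i) := by
      intro i; rw [div_mul_div_comm, hN]; ring
    simp only [e1, e2]
    rw [← Finset.mul_sum, ← Finset.mul_sum, key, key2]
    split_ifs
    · rw [mul_one, mul_one, ← add_div, div_eq_one_iff_eq hpos.ne']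
      nlinarith
    · simp
  · intro α
    funext x
    cases x with
    | inl i =>
      simp only [Ham, mulVec, dotProduct, Fintype.sum_sum_type, Matrix.add_apply,
        Matrix.smul_apply, fromBlocks_apply₁₁, fromBlocks_apply₁₂, Matrix.zero_apply,
        Matrix.one_apply, uVec, Sum.elim_inl, Sum.elim_inr, mulVec_single, mul_one,
        Pi.neg_apply, smul_eq_mul, Pi.single_apply]
      simp only [div_eq_mul_inv, mul_ite, ite_mul, mul_zero, zero_mul, mul_one, one_mul,
        Finset.sum_ite_eq, Finset.sum_ite_eq', Finset.mem_univ, if_true, zero_add, add_zero]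
      field_simp
      ring
    | inr i =>
      simp only [Ham, mulVec, dotProduct, Fintype.sum_sum_type, Matrix.add_apply,
        Matrix.smul_apply, fromBlocks_apply₂₁, fromBlocks_apply₂₂, Matrix.zero_apply,
        Matrix.one_apply, Matrix.neg_apply, Matrix.transpose_apply, uVec, Sum.elim_inl,
        Sum.elim_inr, mulVec_single, mul_one, Pi.neg_apply, smul_eq_mul, Pi.single_apply]
      have key : ∑ x, q x i * q x α = if i = α then 1 else 0 := by
        have h := congrFun (congrFun hq i) α
        simpa [Matrix.mul_apply, Matrix.one_apply, Matrix.transpose_apply] using h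
      simp only [div_eq_mul_inv, mul_ite, ite_mul, mul_zero, zero_mul, mul_one, one_mul,
        neg_mul, mul_neg, neg_neg, Finset.sum_ite_eq, Finset.sum_ite_eq', Finset.mem_univ,
        if_true, zero_add, add_zero, neg_zero]
      have e : ∀ x : Fin 4, Real.cos θ * q x i * (Real.cos θ * q x α *
          (Real.sqrt (2 + 2 * Real.sin θ))⁻¹)
          = Real.cos θ ^ 2 * (Real.sqrt (2 + 2 * Real.sin θ))⁻¹ * (q x i * q x α) := by
        intro x; ring
      simp only [e]
      rw [← Finset.mul_sum, key]
      split_ifs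
      · field_simp
        rw [hc]; ring
      · simp
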